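/- arXiv:1203.5657 — 3 statements merged into one kernel-verified Lean document; each statement's English description precedes it below -/
import Mathlib

section
/- Let C be a triangulated category with a bounded co-t-structure (C_{≥0}, C_{≤0}) with co-heart A = C_{≥0} ∩ C_{≤0}. Then A is a silting subcategory of C: A is closed under direct summands, Hom(M, Σ^m N) = 0 for all m > 0 and all M, N ∈ A, and C = thick(A). -/
/-!
STATEMENT 3: The co-heart A = C_{≥0} ∩ C_{≤0} of a bounded co-t-structure is a silting
subcategory of C: it is closed under direct summands, Hom(M, Σ^m N) = 0 for m > 0 and
M, N ∈ A, and C = thick(A).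
-/

open CategoryTheory Limits Pretriangulated Triangulated

universe v u

variable (C : Type u) [Category.{v} C] [Preadditive C] [HasZeroObject C] [HasShift C ℤ]
  [∀ (n : ℤ), (shiftFunctor C n).Additive] [Pretriangulated C]

def IsExtensionClosed (S : Set C) : Prop :=
  ∀ T : Triangle C, (T ∈ distTriang C) → T.obj₁ ∈ S → T.obj₃ ∈ S → T.obj₂ ∈ S

def IsThick (S : Set C) : Prop :=
  (∀ A B : C, (A ≅ B) → A ∈ S → B ∈ S) ∧
  (∀ Z : C, IsZero Z → Z ∈ S) ∧
  (∀ X ∈ S, ∀ n : ℤ, (shiftFunctor C n).obj X ∈ S) ∧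
  IsExtensionClosed C S ∧
  (∀ X Y : C, (∃ (i : X ⟶ Y) (p : Y ⟶ X), i ≫ p = 𝟙 X) → Y ∈ S → X ∈ S)

def thickClosure (X : Set C) : Set C := ⋂₀ {S : Set C | X ⊆ S ∧ IsThick C S}

/-- A co-t-structure (weight structure) on a triangulated category `C`:
a pair `(ge, le) = (C_{≥0}, C_{≤0})` of strict full additive subcategories closed under
direct summands with `Σ⁻¹C_{≥0} ⊆ C_{≥0}`, `ΣC_{≤0} ⊆ C_{≤0}`, `Hom(C_{≥0}, ΣC_{≤0}) = 0`
and approximation triangles. -/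
structure CoTStructure where
  ge : Set C
  le : Set C
  ge_iso : ∀ A B : C, (A ≅ B) → A ∈ ge → B ∈ ge
  le_iso : ∀ A B : C, (A ≅ B) → A ∈ le → B ∈ le
  ge_zero : ∀ Z : C, IsZero Z → Z ∈ ge
  le_zero : ∀ Z : C, IsZero Z → Z ∈ le
  ge_add : ∀ X Y : C, X ∈ ge → Y ∈ ge → (X ⊞ Y) ∈ ge
  le_add : ∀ X Y : C, X ∈ le → Y ∈ le → (X ⊞ Y) ∈ le
  ge_summand : ∀ X Y : C, (∃ (i : X ⟶ Y) (p : Y ⟶ X), i ≫ p = 𝟙 X) → Y ∈ ge → X ∈ ge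
  le_summand : ∀ X Y : C, (∃ (i : X ⟶ Y) (p : Y ⟶ X), i ≫ p = 𝟙 X) → Y ∈ le → X ∈ le
  ge_shift : ∀ X : C, X ∈ ge → (shiftFunctor C (-1 : ℤ)).obj X ∈ ge
  le_shift : ∀ X : C, X ∈ le → (shiftFunctor C (1 : ℤ)).obj X ∈ le
  hom_zero : ∀ X Y : C, X ∈ ge → Y ∈ le → ∀ f : X ⟶ (shiftFunctor C (1 : ℤ)).obj Y, f = 0
  exists_triangle : ∀ M : C, ∃ (X Y : C) (_ : X ∈ ge)
    (_ : (shiftFunctor C (-1 : ℤ)).obj Y ∈ le) (f : X ⟶ M) (g : M ⟶ Y)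
    (h : Y ⟶ (shiftFunctor C (1 : ℤ)).obj X), Triangle.mk f g h ∈ distTriang C

def CoTStructure.IsBounded (w : CoTStructure C) : Prop :=
  ∀ X : C, (∃ n : ℤ, (shiftFunctor C n).obj X ∈ w.le) ∧
    (∃ n : ℤ, (shiftFunctor C n).obj X ∈ w.ge)

/-- The co-heart of a co-t-structure. -/
def CoTStructure.coheart (w : CoTStructure C) : Set C := w.ge ∩ w.le

variable {C}

/-- `le` is closed under positive shifts. -/
lemma CoT_le_shift_nat (w : CoTStructure C) (k : ℕ) (Z : C) (hZ : Z ∈ w.le) :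
    (shiftFunctor C (k : ℤ)).obj Z ∈ w.le := by
  induction k with
  | zero =>
    exact w.le_iso Z _ ((shiftFunctorZero C ℤ).app Z).symm hZ
  | succ k ih =>
    refine w.le_iso _ _ ?_ (w.le_shift _ ih)
    exact ((shiftFunctorAdd' C (k : ℤ) 1 ((k + 1 : ℕ) : ℤ) (by push_cast; ring)).app Z).symm

/-- `ge` is closed under negative shifts. -/
lemma CoT_ge_shift_nat (w : CoTStructure C) (k : ℕ) (Z : C) (hZ : Z ∈ w.ge) :
    (shiftFunctor C (-(k : ℤ))).obj Z ∈ w.ge := by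
  induction k with
  | zero =>
    have h0 : (-((0 : ℕ) : ℤ)) = (0 : ℤ) := by simp
    rw [h0]
    exact w.ge_iso Z _ ((shiftFunctorZero C ℤ).app Z).symm hZ
  | succ k ih =>
    refine w.ge_iso _ _ ?_ (w.ge_shift _ ih)
    exact ((shiftFunctorAdd' C (-(k : ℤ)) (-1) (-((k + 1 : ℕ) : ℤ)) (by push_cast; ring)).app Z).symm

/-- Hom vanishing for positive shifts. -/
lemma CoT_hom_zero' (w : CoTStructure C) {X Y : C} (hX : X ∈ w.ge) (hY : Y ∈ w.le)
    {m : ℤ} (hm : 0 < m) (f : X ⟶ (shiftFunctor C m).obj Y) : f = 0 := by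
  have hY' : (shiftFunctor C ((m - 1).toNat : ℤ)).obj Y ∈ w.le := CoT_le_shift_nat w _ Y hY
  have e : (shiftFunctor C m).obj Y ≅
      (shiftFunctor C (1 : ℤ)).obj ((shiftFunctor C ((m - 1).toNat : ℤ)).obj Y) :=
    (shiftFunctorAdd' C ((m - 1).toNat : ℤ) 1 m (by
      rw [Int.toNat_of_nonneg (by omega)]; ring)).app Y
  have h0 : f ≫ e.hom = 0 := w.hom_zero X _ hX hY' _
  calc f = (f ≫ e.hom) ≫ e.inv := by simp
  _ = 0 := by rw [h0, Limits.zero_comp]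

/-- `ge` is extension closed. -/
lemma CoT_ge_ext (w : CoTStructure C) : IsExtensionClosed C w.ge := by
  intro T hT h1 h3
  obtain ⟨G, Y, hG, hY, f, g, h, hdt⟩ := w.exists_triangle T.obj₂
  -- any map from an object of ge to Y is zero
  have hzero : ∀ (Z : C), Z ∈ w.ge → ∀ u : Z ⟶ Y, u = 0 := by
    intro Z hZ u
    have e : (shiftFunctor C (1 : ℤ)).obj ((shiftFunctor C (-1 : ℤ)).obj Y) ≅ Y :=
      (shiftFunctorCompIsoId C (-1 : ℤ) (1 : ℤ) (by ring)).app Y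
    have : (u ≫ e.inv) = 0 := w.hom_zero Z _ hZ hY _
    calc u = (u ≫ e.inv) ≫ e.hom := by simp
    _ = 0 := by rw [this, Limits.zero_comp]
  have hg0 : g = 0 := by
    have h13 : T.mor₁ ≫ g = 0 := hzero _ h1 _
    obtain ⟨g', hg'⟩ := Triangle.yoneda_exact₂ T hT g h13
    rw [hg', hzero _ h3 g', Limits.comp_zero]
  obtain ⟨r, hr⟩ := Triangle.coyoneda_exact₂ (Triangle.mk f g h) hdt (𝟙 T.obj₂)
    (by simp [hg0]; exact Limits.comp_zero)
  exact w.ge_summand _ _ ⟨r, f, hr.symm⟩ hG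

/-- `le` is extension closed. -/
lemma CoT_le_ext (w : CoTStructure C) : IsExtensionClosed C w.le := by
  intro T hT h1 h3
  obtain ⟨G, Y, hG, hY, f, g, h, hdt⟩ :=
    w.exists_triangle ((shiftFunctor C (1 : ℤ)).obj T.obj₂)
  have hT' : (CategoryTheory.shiftFunctor (Triangle C) (1 : ℤ)).obj T ∈ distTriang C :=
    Triangle.shift_distinguished T hT 1
  set T' := (CategoryTheory.shiftFunctor (Triangle C) (1 : ℤ)).obj T with hT'def
  -- f : G ⟶ T.obj₂⟦1⟧ = T'.obj₂ is zero
  have hf0 : f = 0 := by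
    have hcomp : f ≫ T'.mor₂ = 0 := CoT_hom_zero' w hG h3 (by norm_num) _
    obtain ⟨g', hg'⟩ := Triangle.coyoneda_exact₂ T' hT' f hcomp
    rw [hg', CoT_hom_zero' w hG h1 (show (0:ℤ) < 1 by norm_num) g']; exact Limits.zero_comp
  obtain ⟨r, hr⟩ := Triangle.yoneda_exact₂ (Triangle.mk f g h) hdt
    (𝟙 ((shiftFunctor C (1 : ℤ)).obj T.obj₂)) (by simp [hf0]; exact Limits.zero_comp)
  -- T.obj₂⟦1⟧ is a direct summand of Y, hence T.obj₂⟦1⟧⟦-1⟧ of Y⟦-1⟧ ∈ le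
  have hmem : (shiftFunctor C (-1 : ℤ)).obj ((shiftFunctor C (1 : ℤ)).obj T.obj₂) ∈ w.le := by
    refine w.le_summand _ ((shiftFunctor C (-1 : ℤ)).obj Y)
      ⟨(shiftFunctor C (-1 : ℤ)).map g, (shiftFunctor C (-1 : ℤ)).map r, ?_⟩ hY
    have hr' : g ≫ r = 𝟙 _ := hr.symm
    exact (Functor.map_comp _ g r).symm.trans ((congrArg (shiftFunctor C (-1 : ℤ)).map hr').trans (CategoryTheory.Functor.map_id _ _))
  exact w.le_iso _ _ ((shiftFunctorCompIsoId C (1 : ℤ) (-1 : ℤ) (by ring)).app T.obj₂) hmem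

/-- Main induction: if `X ∈ ge` and `Σ^k X ∈ le` then `X` is in every thick
subcategory containing the coheart. -/
lemma CoT_gen (w : CoTStructure C) (S : Set C) (hsub : w.coheart ⊆ S) (hS : IsThick C S) :
    ∀ (k : ℕ) (X : C), X ∈ w.ge → (shiftFunctor C (k : ℤ)).obj X ∈ w.le → X ∈ S := by
  obtain ⟨hiso, hzero, hshift, hext, hsummand⟩ := hS
  intro k
  induction k with
  | zero =>
    intro X hX hle
    refine hsub ⟨hX, ?_⟩
    exact w.le_iso _ X ((shiftFunctorZero C ℤ).app X) (by simpa using hle)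
  | succ k ih =>
    intro X hX hle
    obtain ⟨G, Y, hG, hY, f, g, h, hdt⟩ :=
      w.exists_triangle ((shiftFunctor C (1 : ℤ)).obj X)
    set T := Triangle.mk f g h with hTdef
    have hT1 : T.invRotate ∈ distTriang C := inv_rot_of_distTriang T hdt
    have hT2 : T.invRotate.invRotate ∈ distTriang C := inv_rot_of_distTriang _ hT1
    -- T.invRotate = (Y⟦-1⟧, G, X⟦1⟧), T.invRotate.invRotate = (X⟦1⟧⟦-1⟧, Y⟦-1⟧, G)
    have eX : X ≅ (shiftFunctor C (-1 : ℤ)).obj ((shiftFunctor C (1 : ℤ)).obj X) :=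
      ((shiftFunctorCompIsoId C (1 : ℤ) (-1 : ℤ) (by ring)).app X).symm
    have hX1 : T.invRotate.invRotate.obj₁ ∈ w.ge := w.ge_iso X _ eX hX
    -- N := Y⟦-1⟧ is in the coheart
    have hNge : (shiftFunctor C (-1 : ℤ)).obj Y ∈ w.ge :=
      CoT_ge_ext w _ hT2 hX1 hG
    have hNS : (shiftFunctor C (-1 : ℤ)).obj Y ∈ S := hsub ⟨hNge, hY⟩
    -- Σ^k G ∈ le, via the shifted triangle (Y⟦-1⟧⟦k⟧, G⟦k⟧, X⟦1⟧⟦k⟧)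
    have hTk : (CategoryTheory.shiftFunctor (Triangle C) (k : ℤ)).obj T.invRotate
        ∈ distTriang C := Triangle.shift_distinguished _ hT1 (k : ℤ)
    have hGk : (shiftFunctor C (k : ℤ)).obj G ∈ w.le := by
      refine CoT_le_ext w _ hTk ?_ ?_
      · exact CoT_le_shift_nat w k _ hY
      · -- X⟦1⟧⟦k⟧ ≅ X⟦k+1⟧ ∈ le
        refine w.le_iso _ _ ?_ hle
        exact (shiftFunctorAdd' C (1 : ℤ) (k : ℤ) ((k + 1 : ℕ) : ℤ) (by push_cast; ring)).app X
    have hGS : G ∈ S := ih G hG hGk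
    -- X⟦1⟧⟦-1⟧ is an extension of G⟦-1⟧ and Y⟦-1⟧
    have hT3 : T.invRotate.invRotate.invRotate ∈ distTriang C := inv_rot_of_distTriang _ hT2
    have hX1S : T.invRotate.invRotate.obj₁ ∈ S := by
      refine hext _ hT3 ?_ hNS
      exact hshift G hGS (-1)
    exact hiso _ X eX.symm hX1S

theorem statement3 (w : CoTStructure C) (hbounded : w.IsBounded) :
    -- the co-heart is closed under direct summands
    (∀ X Y : C, (∃ (i : X ⟶ Y) (p : Y ⟶ X), i ≫ p = 𝟙 X) → Y ∈ w.coheart →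
      X ∈ w.coheart) ∧
    -- Hom(M, Σ^m N) = 0 for m > 0 and M, N in the co-heart
    (∀ M N : C, M ∈ w.coheart → N ∈ w.coheart → ∀ (m : ℤ), 0 < m →
      ∀ f : M ⟶ (shiftFunctor C m).obj N, f = 0) ∧
    -- the co-heart generates C as a thick subcategory
    (∀ X : C, X ∈ thickClosure C w.coheart) := by
  refine ⟨?_, ?_, ?_⟩
  · intro X Y h hY
    exact ⟨w.ge_summand X Y h hY.1, w.le_summand X Y h hY.2⟩
  · intro M N hM hN m hm f
    exact CoT_hom_zero' w hM.1 hN.2 hm f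
  · intro X
    rw [thickClosure, Set.mem_sInter]
    rintro S ⟨hsub, hS⟩
    obtain ⟨⟨n, hn⟩, ⟨m, hm⟩⟩ := hbounded X
    set a : ℤ := min m n with ha
    -- Σ^a X ∈ ge
    have hage : (shiftFunctor C a).obj X ∈ w.ge := by
      have h1 : (shiftFunctor C (-(((m - a).toNat : ℕ) : ℤ))).obj
          ((shiftFunctor C m).obj X) ∈ w.ge := CoT_ge_shift_nat w _ _ hm
      refine w.ge_iso _ _ ?_ h1
      exact ((shiftFunctorAdd' C m (-(((m - a).toNat : ℕ) : ℤ)) a (by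
        rw [Int.toNat_of_nonneg (by omega)]; omega)).app X).symm
    -- Σ^k (Σ^a X) ∈ le where k = n - a
    have hkle : (shiftFunctor C (((n - a).toNat : ℕ) : ℤ)).obj
        ((shiftFunctor C a).obj X) ∈ w.le := by
      refine w.le_iso _ _ ?_ hn
      exact (shiftFunctorAdd' C a (((n - a).toNat : ℕ) : ℤ) n (by
        rw [Int.toNat_of_nonneg (by omega)]; omega)).app X
    have haS : (shiftFunctor C a).obj X ∈ S :=
      CoT_gen w S hsub hS ((n - a).toNat) _ hage hkle
    obtain ⟨hiso, _, hshift, _, _⟩ := hS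
    refine hiso _ X ?_ (hshift _ haS (-a))
    exact (shiftFunctorCompIsoId C a (-a) (by ring)).app X
end

section
/- Let C be a triangulated category, (C^{≤0}, C^{≥0}) a bounded t-structure with heart A, and (T, F) a torsion pair in A. Define C'^{≤0} = {M ∈ C : H^m(M) = 0 for m > 0 and H^0(M) ∈ T} and C'^{≥0} = {M ∈ C : H^m(M) = 0 for m < -1 and H^{-1}(M) ∈ F}, where H^m denotes cohomology with respect to the given t-structure. Then (C'^{≤0}, C'^{≥0}) is a bounded t-structure on C whose heart has torsion pair (ΣF, T). -/
set_option linter.unusedSectionVars false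
set_option maxHeartbeats 1000000


/-!
STATEMENT 9: The Happel–Reiten–Smalø tilt of a bounded t-structure (C^{≤0}, C^{≥0}) with
heart A at a torsion pair (T, F) in A, namely
C'^{≤0} = {M : H^m(M) = 0 for m > 0 and H^0(M) ∈ T} and
C'^{≥0} = {M : H^m(M) = 0 for m < -1 and H^{-1}(M) ∈ F},
is a bounded t-structure on C whose heart carries the torsion pair (ΣF, T).
-/

open CategoryTheory Limits Pretriangulated Triangulated

universe v u

variable {C : Type u} [Category.{v} C] [Preadditive C] [HasZeroObject C] [HasShift C ℤ]
  [∀ (n : ℤ), (shiftFunctor C n).Additive] [Pretriangulated C]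

def tHeart (t : TStructure C) : Set C := {X : C | t.le 0 X ∧ t.ge 0 X}

def tIsBounded (t : TStructure C) : Prop :=
  ∀ X : C, (∃ n : ℤ, t.le n X) ∧ (∃ n : ℤ, t.ge n X)

/-- A choice of truncation `τ^{≤0} M` provided by the t-structure axioms. -/
noncomputable def tauLE (t : TStructure C) (M : C) : C :=
  (t.exists_triangle M 0 1 rfl).choose

/-- A choice of truncation `τ^{≥1} M` provided by the t-structure axioms. -/
noncomputable def tauGE1 (t : TStructure C) (M : C) : C :=
  (t.exists_triangle M 0 1 rfl).choose_spec.choose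

/-- `τ^{≥0} M = Σ (τ^{≥1} (Σ⁻¹ M))`. -/
noncomputable def tauGE0 (t : TStructure C) (M : C) : C :=
  (shiftFunctor C (1 : ℤ)).obj (tauGE1 t ((shiftFunctor C (-1 : ℤ)).obj M))

/-- The zeroth cohomology `H^0(M) = τ^{≤0} τ^{≥0} M` of `M` with respect to the
t-structure `t`; it lies in the heart. -/
noncomputable def tH0 (t : TStructure C) (M : C) : C := tauLE t (tauGE0 t M)

/-- The `m`-th cohomology `H^m(M) = H^0(Σ^m M)` with respect to `t`. -/
noncomputable def tH (t : TStructure C) (m : ℤ) (M : C) : C :=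
  tH0 t ((shiftFunctor C m).obj M)

/-- A torsion pair `(T, F)` in the heart of `t`: both classes are strict subclasses of
the heart, `Hom(T, F) = 0`, and every object `M` of the heart sits in a short exact
sequence (equivalently, a distinguished triangle) `tM → M → M/tM` with `tM ∈ T` and
`M/tM ∈ F`. -/
def IsTorsionPair (t : TStructure C) (T F : Set C) : Prop :=
  T ⊆ tHeart t ∧ F ⊆ tHeart t ∧
  (∀ A B : C, (A ≅ B) → A ∈ T → B ∈ T) ∧
  (∀ A B : C, (A ≅ B) → A ∈ F → B ∈ F) ∧
  (∀ X Y : C, X ∈ T → Y ∈ F → ∀ f : X ⟶ Y, f = 0) ∧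
  (∀ M : C, M ∈ tHeart t → ∃ (X Y : C) (_ : X ∈ T) (_ : Y ∈ F)
    (f : X ⟶ M) (g : M ⟶ Y) (h : Y ⟶ (shiftFunctor C (1 : ℤ)).obj X),
    Triangle.mk f g h ∈ distTriang C)

namespace HRS

variable (t : TStructure C)

/-! ### Basic vanishing and orthogonality lemmas -/

lemma hom_zero {X Y : C} (f : X ⟶ Y) {a b : ℤ} (h : a < b)
    (hX : t.le a X) (hY : t.ge b Y) : f = 0 := by
  have hX' : t.le 0 (X⟦a⟧) := t.le_shift a a 0 (add_zero a) X hX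
  have hY' : t.ge (b - a) (Y⟦a⟧) := t.ge_shift b a (b - a) (by omega) Y hY
  have hY'' : t.ge 1 (Y⟦a⟧) := t.ge_antitone (by omega) _ hY'
  have hz : (shiftFunctor C a).map f = 0 := t.zero' _ hX' hY''
  apply (shiftFunctor C a).map_injective
  rw [hz, Functor.map_zero]

lemma isZero_of_LE_GE {X : C} {a b : ℤ} (h : a < b)
    (hX : t.le a X) (hY : t.ge b X) : IsZero X :=
  (IsZero.iff_id_eq_zero X).2 (hom_zero t _ h hX hY)

lemma isZero_shift {M : C} (n : ℤ) (h : IsZero M) : IsZero (M⟦n⟧) :=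
  (shiftFunctor C n).map_isZero h

lemma isZero_of_shift {M : C} (n : ℤ) (h : IsZero (M⟦n⟧)) : IsZero M :=
  IsZero.of_iso ((shiftFunctor C (-n)).map_isZero h) ((shiftEquiv C n).unitIso.app M)

lemma LE_of_isZero (n : ℤ) {M : C} (h : IsZero M) : t.le n M := by
  obtain ⟨A, B, hA, hB, f, g, h', mem⟩ := t.exists_triangle M n (n + 1) rfl
  have hiso : IsIso (Triangle.mk f g h').mor₃ := (Triangle.isZero₂_iff_isIso₃ _ mem).1 h
  have hB' : t.ge (n + 1) (A⟦(1 : ℤ)⟧) :=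
    ObjectProperty.prop_of_iso (t.ge (n + 1)) (@asIso _ _ _ _ (Triangle.mk f g h').mor₃ hiso) hB
  have hz : IsZero (A⟦(1 : ℤ)⟧) :=
    isZero_of_LE_GE t (show n - 1 < n + 1 by omega) (t.le_shift n 1 (n - 1) (by omega) A hA) hB'
  exact ObjectProperty.prop_of_iso (t.le n) ((isZero_of_shift 1 hz).iso h) hA

lemma GE_of_isZero (n : ℤ) {M : C} (h : IsZero M) : t.ge n M := by
  obtain ⟨A, B, hA, hB, f, g, h', mem⟩ := t.exists_triangle M (n - 1) n (by omega)
  have hiso : IsIso (Triangle.mk f g h').mor₃ := (Triangle.isZero₂_iff_isIso₃ _ mem).1 h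
  have hB' : t.le (n - 2) B :=
    ObjectProperty.prop_of_iso (t.le (n - 2)) (@asIso _ _ _ _ (Triangle.mk f g h').mor₃ hiso).symm
      (t.le_shift (n - 1) 1 (n - 2) (by omega) A hA)
  have hz : IsZero B := isZero_of_LE_GE t (show n - 2 < n by omega) hB' hB
  exact ObjectProperty.prop_of_iso (t.ge n) (hz.iso h) hB

lemma LE_of_orth (n : ℤ) {X : C}
    (hX : ∀ W : C, t.ge (n + 1) W → ∀ f : X ⟶ W, f = 0) : t.le n X := by
  obtain ⟨A, B, hA, hB, f, g, h, mem⟩ := t.exists_triangle X n (n + 1) rfl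
  have hg : g = 0 := hX B hB g
  obtain ⟨p, hp⟩ := Triangle.yoneda_exact₃ _ mem (𝟙 B)
    (by show g ≫ 𝟙 B = 0; rw [hg, zero_comp])
  have hp0 : p = 0 := hom_zero t p (show n - 1 < n + 1 by omega)
    (t.le_shift n 1 (n - 1) (by omega) A hA) hB
  have hzB : IsZero B := (IsZero.iff_id_eq_zero B).2 (by rw [hp, hp0, comp_zero]; rfl)
  have : IsIso (Triangle.mk f g h).mor₁ := (Triangle.isZero₃_iff_isIso₁ _ mem).1 hzB
  exact ObjectProperty.prop_of_iso (t.le n) (@asIso _ _ _ _ (Triangle.mk f g h).mor₁ this) hA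

lemma GE_of_orth (n : ℤ) {X : C}
    (hX : ∀ W : C, t.le (n - 1) W → ∀ f : W ⟶ X, f = 0) : t.ge n X := by
  obtain ⟨A, B, hA, hB, f, g, h, mem⟩ := t.exists_triangle X (n - 1) n (by omega)
  have hf : f = 0 := hX A hA f
  obtain ⟨ψ, hψ⟩ := Triangle.coyoneda_exact₂ _ (inv_rot_of_distTriang _ mem) (𝟙 A)
    (by show 𝟙 A ≫ f = 0; rw [hf, comp_zero])
  have hψ0 : ψ = 0 := hom_zero t ψ (show n - 1 < n + 1 by omega) hA
    (t.ge_shift n (-1) (n + 1) (by omega) B hB)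
  have hzA : IsZero A := (IsZero.iff_id_eq_zero A).2 (by rw [hψ, hψ0, zero_comp]; rfl)
  have : IsIso (Triangle.mk f g h).mor₂ := (Triangle.isZero₁_iff_isIso₂ _ mem).1 hzA
  exact ObjectProperty.prop_of_iso (t.ge n) (@asIso _ _ _ _ (Triangle.mk f g h).mor₂ this).symm hB

lemma LE_ext {T : Triangle C} (hT : T ∈ distTriang C) (n : ℤ)
    (h₁ : t.le n T.obj₁) (h₃ : t.le n T.obj₃) : t.le n T.obj₂ := by
  apply LE_of_orth t n
  intro W hW f
  have : T.mor₁ ≫ f = 0 := hom_zero t _ (show n < n + 1 by omega) h₁ hW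
  obtain ⟨g, hg⟩ := Triangle.yoneda_exact₂ _ hT f this
  rw [hg, hom_zero t g (show n < n + 1 by omega) h₃ hW, comp_zero]

lemma GE_ext {T : Triangle C} (hT : T ∈ distTriang C) (n : ℤ)
    (h₁ : t.ge n T.obj₁) (h₃ : t.ge n T.obj₃) : t.ge n T.obj₂ := by
  apply GE_of_orth t n
  intro W hW f
  have : f ≫ T.mor₂ = 0 := hom_zero t _ (show n - 1 < n by omega) hW h₃
  obtain ⟨g, hg⟩ := Triangle.coyoneda_exact₂ _ hT f this
  rw [hg, hom_zero t g (show n - 1 < n by omega) hW h₁, zero_comp]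

/-! ### Chosen truncation triangles -/

section

variable (t : TStructure C)

/-- Truncation data. -/
def IsTrunc (n : ℤ) (A M B : C) (f : A ⟶ M) (g : M ⟶ B) (h : B ⟶ A⟦(1 : ℤ)⟧) : Prop :=
  (Triangle.mk f g h ∈ distTriang C) ∧ t.le n A ∧ t.ge (n + 1) B

lemma tau_trunc (M : C) :
    ∃ f g h, IsTrunc t 0 (tauLE t M) M (tauGE1 t M) f g h := by
  obtain ⟨hA, hB, f, g, h, mem⟩ := (t.exists_triangle M 0 1 rfl).choose_spec.choose_spec
  exact ⟨f, g, h, mem, hA, by rw [zero_add]; exact hB⟩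

/-- The `≤ -1` part of the `(-1,0)`-truncation of `M`. -/
noncomputable def L0 (M : C) : C := (tauLE t ((shiftFunctor C (-1 : ℤ)).obj M))⟦(1 : ℤ)⟧

lemma s_trunc (M : C) :
    ∃ f g h, IsTrunc t (-1) (L0 t M) M (tauGE0 t M) f g h := by
  obtain ⟨f, g, h, mem, hA, hB⟩ := tau_trunc t (M⟦(-1 : ℤ)⟧)
  let T := (Triangle.shiftFunctor C (1 : ℤ)).obj (Triangle.mk f g h)
  let e : ((M⟦(-1 : ℤ)⟧)⟦(1 : ℤ)⟧) ≅ M := (shiftFunctorCompIsoId C (-1 : ℤ) (1 : ℤ) (by omega)).app M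
  have hT' : Triangle.mk (T.mor₁ ≫ e.hom) (e.inv ≫ T.mor₂) T.mor₃ ∈ distTriang C := by
    refine isomorphic_distinguished _ (Triangle.shift_distinguished _ mem 1) _ ?_
    refine Triangle.isoMk _ _ (Iso.refl _) e.symm (Iso.refl _) ?_ ?_ ?_
    · exact (Category.assoc _ _ _).trans ((congrArg (T.mor₁ ≫ ·) e.hom_inv_id).trans ((Category.comp_id _).trans (Category.id_comp _).symm))
    · exact Category.comp_id _
    · exact (congrArg (T.mor₃ ≫ ·) (CategoryTheory.Functor.map_id _ _)).trans ((Category.comp_id _).trans (Category.id_comp _).symm)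
  refine ⟨_, _, _, hT', t.le_shift 0 1 (-1) (by omega) _ (by simpa using hA),
    t.ge_shift 1 1 0 (by omega) _ (by simpa using hB)⟩

variable {t}

lemma IsTrunc.cancel {n : ℤ} {A M B : C} {f : A ⟶ M} {g : M ⟶ B} {h : B ⟶ A⟦(1 : ℤ)⟧}
    (H : IsTrunc t n A M B f g h) {W : C} (hW : t.le n W) (d : W ⟶ A)
    (hd : d ≫ f = 0) : d = 0 := by
  obtain ⟨Hd, hA, hB⟩ := H
  obtain ⟨ψ, hψ⟩ := Triangle.coyoneda_exact₂ _ (inv_rot_of_distTriang _ Hd) d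
    (by show d ≫ f = 0; rw [hd])
  have hψ0 : ψ = 0 := hom_zero t ψ (show n < n + 2 by omega) hW
    (t.ge_shift (n + 1) (-1) (n + 2) (by omega) _ hB)
  rw [hψ, hψ0, zero_comp]; rfl

lemma IsTrunc.lift {n : ℤ} {A M B A' M' B' : C}
    {f : A ⟶ M} {g : M ⟶ B} {h : B ⟶ A⟦(1 : ℤ)⟧}
    {f' : A' ⟶ M'} {g' : M' ⟶ B'} {h' : B' ⟶ A'⟦(1 : ℤ)⟧}
    (H : IsTrunc t n A M B f g h) (H' : IsTrunc t n A' M' B' f' g' h') (u : M ⟶ M') :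
    ∃ (a : A ⟶ A') (b : B ⟶ B'),
      f ≫ u = a ≫ f' ∧ g ≫ b = u ≫ g' ∧ h ≫ a⟦(1 : ℤ)⟧' = b ≫ h' := by
  have hv : (f ≫ u) ≫ g' = 0 := hom_zero t _ (show n < n + 1 by omega) H.2.1 H'.2.2
  obtain ⟨a, ha⟩ := Triangle.coyoneda_exact₂ _ H'.1 (f ≫ u) hv
  obtain ⟨b, hb₁, hb₂⟩ := complete_distinguished_triangle_morphism _ _ H.1 H'.1 a u ha
  exact ⟨a, b, ha, hb₁, hb₂⟩

lemma IsTrunc.unique {n : ℤ} {A M B A' M' B' : C}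
    {f : A ⟶ M} {g : M ⟶ B} {h : B ⟶ A⟦(1 : ℤ)⟧}
    {f' : A' ⟶ M'} {g' : M' ⟶ B'} {h' : B' ⟶ A'⟦(1 : ℤ)⟧}
    (H : IsTrunc t n A M B f g h) (H' : IsTrunc t n A' M' B' f' g' h') (u : M ≅ M') :
    Nonempty (A ≅ A') ∧ Nonempty (B ≅ B') := by
  obtain ⟨a, b, ha, hb, hc⟩ := H.lift H' u.hom
  obtain ⟨a', b', ha', hb', hc'⟩ := H'.lift H u.inv
  have haa : a ≫ a' = 𝟙 A := by
    have hz : (a ≫ a' - 𝟙 A) ≫ f = 0 := by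
      rw [Preadditive.sub_comp, Category.id_comp, Category.assoc, ← ha', ← Category.assoc, ← ha,
        Category.assoc, u.hom_inv_id, Category.comp_id, sub_self]
    have := H.cancel H.2.1 _ hz
    rwa [sub_eq_zero] at this
  have ha'a : a' ≫ a = 𝟙 A' := by
    have hz : (a' ≫ a - 𝟙 A') ≫ f' = 0 := by
      rw [Preadditive.sub_comp, Category.id_comp, Category.assoc, ← ha, ← Category.assoc, ← ha',
        Category.assoc, u.inv_hom_id, Category.comp_id, sub_self]
    have := H'.cancel H'.2.1 _ hz
    rwa [sub_eq_zero] at this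
  have hIa : IsIso a := ⟨a', haa, ha'a⟩
  let φ : Triangle.mk f g h ⟶ Triangle.mk f' g' h' :=
    { hom₁ := a, hom₂ := u.hom, hom₃ := b,
      comm₁ := ha, comm₂ := hb, comm₃ := hc }
  haveI hIa' : IsIso a := hIa
  haveI hIb : IsIso b :=
    isIso₃_of_isIso₁₂ φ H.1 H'.1 hIa (inferInstanceAs (IsIso u.hom))
  exact ⟨⟨asIso a⟩, ⟨asIso b⟩⟩

lemma IsTrunc.iso_tau {A M B : C} {f : A ⟶ M} {g : M ⟶ B} {h : B ⟶ A⟦(1 : ℤ)⟧}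
    (H : IsTrunc t 0 A M B f g h) :
    Nonempty (A ≅ tauLE t M) ∧ Nonempty (B ≅ tauGE1 t M) := by
  obtain ⟨f', g', h', H'⟩ := tau_trunc t M
  exact H.unique H' (Iso.refl M)

lemma IsTrunc.iso_s {A M B : C} {f : A ⟶ M} {g : M ⟶ B} {h : B ⟶ A⟦(1 : ℤ)⟧}
    (H : IsTrunc t (-1) A M B f g h) :
    Nonempty (A ≅ L0 t M) ∧ Nonempty (B ≅ tauGE0 t M) := by
  obtain ⟨f', g', h', H'⟩ := s_trunc t M
  exact H.unique H' (Iso.refl M)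

variable (t)

lemma tauLE_congr {M M' : C} (e : M ≅ M') : Nonempty (tauLE t M ≅ tauLE t M') := by
  obtain ⟨f, g, h, H⟩ := tau_trunc t M
  obtain ⟨f', g', h', H'⟩ := tau_trunc t M'
  exact (H.unique H' e).1

lemma tauGE1_congr {M M' : C} (e : M ≅ M') : Nonempty (tauGE1 t M ≅ tauGE1 t M') := by
  obtain ⟨f, g, h, H⟩ := tau_trunc t M
  obtain ⟨f', g', h', H'⟩ := tau_trunc t M'
  exact (H.unique H' e).2

lemma tauGE0_congr {M M' : C} (e : M ≅ M') : Nonempty (tauGE0 t M ≅ tauGE0 t M') := by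
  obtain ⟨f, g, h, H⟩ := s_trunc t M
  obtain ⟨f', g', h', H'⟩ := s_trunc t M'
  exact (H.unique H' e).2

lemma tH0_congr {M M' : C} (e : M ≅ M') : Nonempty (tH0 t M ≅ tH0 t M') :=
  tauLE_congr t (tauGE0_congr t e).some

end

/-! ### Computations with the chosen truncations -/

section
variable (t : TStructure C)

lemma tauLE_LE0 (M : C) : t.le 0 (tauLE t M) := by
  obtain ⟨f, g, h, H⟩ := tau_trunc t M; exact H.2.1

lemma tauGE1_GE1 (M : C) : t.ge 1 (tauGE1 t M) := by
  obtain ⟨f, g, h, H⟩ := tau_trunc t M; simpa using H.2.2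

lemma tauGE0_GE0 (M : C) : t.ge 0 (tauGE0 t M) := by
  obtain ⟨f, g, h, H⟩ := s_trunc t M; simpa using H.2.2

lemma L0_LE_negOne (M : C) : t.le (-1) (L0 t M) := by
  obtain ⟨f, g, h, H⟩ := s_trunc t M; exact H.2.1

lemma isZero_tauGE1_of_LE0 {M : C} (hM : t.le 0 M) : IsZero (tauGE1 t M) := by
  obtain ⟨f, g, h, H⟩ := tau_trunc t M
  have hg : g = 0 := hom_zero t g (show (0 : ℤ) < 1 by omega) hM (by simpa using H.2.2)
  obtain ⟨p, hp⟩ := Triangle.yoneda_exact₃ _ H.1 (𝟙 (tauGE1 t M)) (by show g ≫ 𝟙 (tauGE1 t M) = 0; rw [hg, zero_comp])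
  have hp0 : p = 0 := hom_zero t p (show (-1 : ℤ) < 1 by omega)
    (t.le_shift 0 1 (-1) (by omega) _ H.2.1) (by simpa using H.2.2)
  exact (IsZero.iff_id_eq_zero _).2 (by rw [hp, hp0, comp_zero]; rfl)

lemma isZero_tauLE_of_GE1 {M : C} (hM : t.ge 1 M) : IsZero (tauLE t M) := by
  obtain ⟨f, g, h, H⟩ := tau_trunc t M
  have hf : 𝟙 (tauLE t M) ≫ f = 0 := by
    rw [Category.id_comp]; exact hom_zero t f (show (0 : ℤ) < 1 by omega) H.2.1 hM
  have := H.cancel H.2.1 _ hf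
  exact (IsZero.iff_id_eq_zero _).2 this

lemma tauLE_iso_self_of_LE0 {M : C} (hM : t.le 0 M) : Nonempty (tauLE t M ≅ M) := by
  obtain ⟨f, g, h, H⟩ := tau_trunc t M
  have : IsIso (Triangle.mk f g h).mor₁ :=
    (Triangle.isZero₃_iff_isIso₁ _ H.1).1 (isZero_tauGE1_of_LE0 t hM)
  exact ⟨@asIso _ _ _ _ (Triangle.mk f g h).mor₁ this⟩

lemma tauGE1_iso_self_of_GE1 {M : C} (hM : t.ge 1 M) : Nonempty (tauGE1 t M ≅ M) := by
  obtain ⟨f, g, h, H⟩ := tau_trunc t M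
  have : IsIso (Triangle.mk f g h).mor₂ :=
    (Triangle.isZero₁_iff_isIso₂ _ H.1).1 (isZero_tauLE_of_GE1 t hM)
  exact ⟨(@asIso _ _ _ _ (Triangle.mk f g h).mor₂ this).symm⟩

lemma isZero_L0_of_GE0 {M : C} (hM : t.ge 0 M) : IsZero (L0 t M) := by
  have : t.ge 1 (M⟦(-1 : ℤ)⟧) := t.ge_shift 0 (-1) 1 (by omega) M hM
  exact isZero_shift 1 (isZero_tauLE_of_GE1 t this)

lemma tauGE0_iso_self_of_GE0 {M : C} (hM : t.ge 0 M) : Nonempty (tauGE0 t M ≅ M) := by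
  obtain ⟨f, g, h, H⟩ := s_trunc t M
  have : IsIso (Triangle.mk f g h).mor₂ :=
    (Triangle.isZero₁_iff_isIso₂ _ H.1).1 (isZero_L0_of_GE0 t hM)
  exact ⟨(@asIso _ _ _ _ (Triangle.mk f g h).mor₂ this).symm⟩

lemma tauGE0_LE0_of_LE0 {M : C} (hM : t.le 0 M) : t.le 0 (tauGE0 t M) := by
  obtain ⟨f, g, h, H⟩ := s_trunc t M
  have h₃ : t.le 0 ((L0 t M)⟦(1 : ℤ)⟧) :=
    t.le_monotone (show (-2 : ℤ) ≤ 0 by omega)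
      _ (t.le_shift (-1) 1 (-2) (by omega) _ (L0_LE_negOne t M))
  exact LE_ext t (rot_of_distTriang _ H.1) 0 hM h₃

lemma tauLE_GE0_of_GE0 {M : C} (hM : t.ge 0 M) : t.ge 0 (tauLE t M) := by
  obtain ⟨f, g, h, H⟩ := tau_trunc t M
  have h₁ : t.ge 0 ((tauGE1 t M)⟦(-1 : ℤ)⟧) :=
    t.ge_antitone (show (0 : ℤ) ≤ 2 by omega) _
      (t.ge_shift 1 (-1) 2 (by omega) _ (tauGE1_GE1 t M))
  exact GE_ext t (inv_rot_of_distTriang _ H.1) 0 h₁ hM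

lemma tH0_LE0 (M : C) : t.le 0 (tH0 t M) := tauLE_LE0 t _

lemma tH0_GE0 (M : C) : t.ge 0 (tH0 t M) := tauLE_GE0_of_GE0 t (tauGE0_GE0 t M)

lemma tH0_iso_self_of_heart {M : C} (h1 : t.le 0 M) (h2 : t.ge 0 M) :
    Nonempty (tH0 t M ≅ M) := by
  have e1 : tauGE0 t M ≅ M := (tauGE0_iso_self_of_GE0 t h2).some
  have e2 : tH0 t M ≅ tauLE t M := (tauLE_congr t e1).some
  exact ⟨e2.trans (tauLE_iso_self_of_LE0 t h1).some⟩

lemma isZero_tH0_of_LE_neg {M : C} (hM : t.le (-1) M) : IsZero (tH0 t M) := by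
  have h1 : t.le 0 (M⟦(-1 : ℤ)⟧) := t.le_shift (-1) (-1) 0 (by omega) M hM
  have h2 : IsZero (tauGE0 t M) := isZero_shift 1 (isZero_tauGE1_of_LE0 t h1)
  exact isZero_tauLE_of_GE1 t (GE_of_isZero t 1 h2)

lemma isZero_tH0_of_GE1 {M : C} (hM : t.ge 1 M) : IsZero (tH0 t M) := by
  have e : tauGE0 t M ≅ M := (tauGE0_iso_self_of_GE0 t (t.ge_antitone (by omega) _ hM)).some
  exact isZero_tauLE_of_GE1 t (ObjectProperty.prop_of_iso (t.ge 1) e.symm hM)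

lemma isZero_tH_of_LE {n : ℤ} {M : C} (hM : t.le n M) {m : ℤ} (h : n < m) :
    IsZero (tH t m M) := by
  have h1 : t.le (n - m) (M⟦m⟧) := t.le_shift n m (n - m) (by omega) M hM
  exact isZero_tH0_of_LE_neg t (t.le_monotone (show n - m ≤ -1 by omega) _ h1)

lemma isZero_tH_of_GE {n : ℤ} {M : C} (hM : t.ge n M) {m : ℤ} (h : m < n) :
    IsZero (tH t m M) := by
  have h1 : t.ge (n - m) (M⟦m⟧) := t.ge_shift n m (n - m) (by omega) M hM
  exact isZero_tH0_of_GE1 t (t.ge_antitone (show (1 : ℤ) ≤ n - m by omega) _ h1)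

lemma LE_step {N : ℤ} {M : C} (hN : t.le N M) (hz : IsZero (tH t N M)) :
    t.le (N - 1) M := by
  have hX : t.le 0 (M⟦N⟧) := t.le_shift N N 0 (by omega) M hN
  have h1 : t.le 0 (tauGE0 t (M⟦N⟧)) := tauGE0_LE0_of_LE0 t hX
  have e : tH0 t (M⟦N⟧) ≅ tauGE0 t (M⟦N⟧) := (tauLE_iso_self_of_LE0 t h1).some
  have hzG : IsZero (tauGE0 t (M⟦N⟧)) := IsZero.of_iso hz e.symm
  obtain ⟨f, g, h, H⟩ := s_trunc t (M⟦N⟧)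
  have : IsIso (Triangle.mk f g h).mor₁ := (Triangle.isZero₃_iff_isIso₁ _ H.1).1 hzG
  have hXneg : t.le (-1) (M⟦N⟧) :=
    ObjectProperty.prop_of_iso (t.le (-1)) (@asIso _ _ _ _ (Triangle.mk f g h).mor₁ this) H.2.1
  rw [← t.shift_le N (-1) (N - 1) (by omega)]
  exact hXneg

lemma GE_step {N : ℤ} {M : C} (hN : t.ge N M) (hz : IsZero (tH t N M)) :
    t.ge (N + 1) M := by
  have hX : t.ge 0 (M⟦N⟧) := t.ge_shift N N 0 (by omega) M hN
  have e0 : tauGE0 t (M⟦N⟧) ≅ M⟦N⟧ := (tauGE0_iso_self_of_GE0 t hX).some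
  have e : tH0 t (M⟦N⟧) ≅ tauLE t (M⟦N⟧) := (tauLE_congr t e0).some
  have hzL : IsZero (tauLE t (M⟦N⟧)) := IsZero.of_iso hz e.symm
  obtain ⟨f, g, h, H⟩ := tau_trunc t (M⟦N⟧)
  have : IsIso (Triangle.mk f g h).mor₂ := (Triangle.isZero₁_iff_isIso₂ _ H.1).1 hzL
  have hX1 : t.ge 1 (M⟦N⟧) :=
    ObjectProperty.prop_of_iso (t.ge 1) (@asIso _ _ _ _ (Triangle.mk f g h).mor₂ this).symm (tauGE1_GE1 t _)
  rw [← t.shift_ge N 1 (N + 1) (by omega)]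
  exact hX1

lemma LE_of_vanish (hb : tIsBounded t) {n : ℤ} {M : C}
    (h : ∀ m : ℤ, n < m → IsZero (tH t m M)) : t.le n M := by
  obtain ⟨⟨N, hN⟩, -⟩ := hb M
  have key : ∀ (k : ℕ) (N : ℤ), t.le N M → N ≤ n + k → t.le n M := by
    intro k
    induction k with
    | zero => exact fun N hN hle => t.le_monotone (by omega) _ hN
    | succ k ih =>
      intro N hN hle
      by_cases hc : N ≤ n + k
      · exact ih N hN hc
      · exact ih (N - 1) (LE_step t hN (h N (by omega))) (by omega)
  exact key (N - n).toNat N hN (by omega)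

lemma GE_of_vanish (hb : tIsBounded t) {n : ℤ} {M : C}
    (h : ∀ m : ℤ, m < n → IsZero (tH t m M)) : t.ge n M := by
  obtain ⟨-, ⟨N, hN⟩⟩ := hb M
  have key : ∀ (k : ℕ) (N : ℤ), t.ge N M → n ≤ N + k → t.ge n M := by
    intro k
    induction k with
    | zero => exact fun N hN hle => t.ge_antitone (by omega) _ hN
    | succ k ih =>
      intro N hN hle
      by_cases hc : n ≤ N + k
      · exact ih N hN hc
      · exact ih (N + 1) (GE_step t hN (h N (by omega))) (by omega)
  exact key (n - N).toNat N hN (by omega)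

end

/-! ### Torsion pair lemmas -/

section
variable (t : TStructure C) (T F : Set C) (hTF : IsTorsionPair t T F)

include hTF

open ZeroObject in
lemma zero_mem_TF : (∀ Z : C, IsZero Z → Z ∈ T) ∧ (∀ Z : C, IsZero Z → Z ∈ F) := by
  obtain ⟨hT, hF, hTiso, hFiso, horth, hdec⟩ := hTF
  obtain ⟨P, Q, hP, hQ, i, p, w, hTor⟩ := hdec 0
    ⟨LE_of_isZero t 0 (isZero_zero C), GE_of_isZero t 0 (isZero_zero C)⟩
  have hiso : IsIso (Triangle.mk i p w).mor₃ :=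
    (Triangle.isZero₂_iff_isIso₃ _ hTor).1 (isZero_zero C)
  have hPle : t.le (-1) (P⟦(1 : ℤ)⟧) := t.le_shift 0 1 (-1) (by omega) P (hT hP).1
  have hQle : t.le (-1) Q :=
    ObjectProperty.prop_of_iso (t.le (-1)) (@asIso _ _ _ _ (Triangle.mk i p w).mor₃ hiso).symm hPle
  have hzQ : IsZero Q := isZero_of_LE_GE t (show (-1 : ℤ) < 0 by omega) hQle (hF hQ).2
  have hzP : IsZero P := isZero_of_shift 1
    (IsZero.of_iso hzQ (@asIso _ _ _ _ (Triangle.mk i p w).mor₃ hiso).symm)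
  exact ⟨fun Z hZ => hTiso P Z (hzP.iso hZ) hP, fun Z hZ => hFiso Q Z (hzQ.iso hZ) hQ⟩

lemma core_zero {X Y : C} (f : X ⟶ Y) (hX1 : t.le 0 X) (hX2 : tH0 t X ∈ T)
    (hY1 : t.ge 0 Y) (hY2 : tH0 t Y ∈ F) : f = 0 := by
  obtain ⟨f1, f2, f3, HX⟩ := s_trunc t X
  have hGle : t.le 0 (tauGE0 t X) := tauGE0_LE0_of_LE0 t hX1
  have eG : tH0 t X ≅ tauGE0 t X := (tauLE_iso_self_of_LE0 t hGle).some
  have hGT : tauGE0 t X ∈ T := hTF.2.2.1 _ _ eG hX2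
  obtain ⟨g1, g2, g3, HY⟩ := tau_trunc t Y
  have hAge : t.ge 0 (tauLE t Y) := tauLE_GE0_of_GE0 t hY1
  have eA : tH0 t Y ≅ tauLE t Y :=
    (tauLE_congr t (tauGE0_iso_self_of_GE0 t hY1).some).some
  have hAF : tauLE t Y ∈ F := hTF.2.2.2.1 _ _ eA hY2
  have hfq : f ≫ g2 = 0 :=
    hom_zero t _ (show (0 : ℤ) < 1 by omega) hX1 (by simpa using HY.2.2)
  obtain ⟨α, hα⟩ := Triangle.coyoneda_exact₂ _ HY.1 f hfq
  have hf1α : f1 ≫ α = 0 :=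
    hom_zero t _ (show (-1 : ℤ) < 0 by omega) HX.2.1 hAge
  obtain ⟨β, hβ⟩ := Triangle.yoneda_exact₂ _ HX.1 α hf1α
  have hβ0 : β = 0 := hTF.2.2.2.2.1 _ _ hGT hAF β
  rw [hα, hβ, hβ0, comp_zero]; exact zero_comp

omit hTF in
lemma heart_core {W : C} (h1 : t.le 0 W) (h2 : t.ge 0 W) :
    t.le 0 W ∧ Nonempty (tH0 t W ≅ W) := ⟨h1, tH0_iso_self_of_heart t h1 h2⟩

lemma lift_T {W H P Q : C} {i : P ⟶ H} {p : H ⟶ Q} {w : Q ⟶ P⟦(1 : ℤ)⟧}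
    (hd : Triangle.mk i p w ∈ distTriang C) (hP : P ∈ T) (hQ : Q ∈ F)
    (hH : t.ge 0 H) (hW1 : t.le 0 W) (hW2 : tH0 t W ∈ T) (α : W ⟶ H) :
    ∃ σ : W ⟶ P, α = σ ≫ i := by
  obtain ⟨f1, f2, f3, HW⟩ := s_trunc t W
  have hGle : t.le 0 (tauGE0 t W) := tauGE0_LE0_of_LE0 t hW1
  have eG : tH0 t W ≅ tauGE0 t W := (tauLE_iso_self_of_LE0 t hGle).some
  have hGT : tauGE0 t W ∈ T := hTF.2.2.1 _ _ eG hW2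
  have hf1α : f1 ≫ α = 0 :=
    hom_zero t _ (show (-1 : ℤ) < 0 by omega) HW.2.1 hH
  obtain ⟨β, hβ⟩ := Triangle.yoneda_exact₂ _ HW.1 α hf1α
  have hβp : β ≫ p = 0 := hTF.2.2.2.2.1 _ _ hGT (hTF.2.2.2.1 _ _ (Iso.refl Q) hQ) (β ≫ p)
  obtain ⟨γ, hγ⟩ := Triangle.coyoneda_exact₂ _ hd β hβp
  exact ⟨f2 ≫ γ, by rw [hβ, hγ]; exact (Category.assoc _ _ _).symm⟩

end

/-! ### The tilted truncation triangle -/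

section
variable (t : TStructure C) (T F : Set C)

lemma tilt_exists (hTF : IsTorsionPair t T F) (M : C) :
    ∃ (X Y : C) (_ : t.le 0 X ∧ tH0 t X ∈ T) (_ : t.ge 0 Y ∧ tH0 t Y ∈ F)
      (f : X ⟶ M) (g : M ⟶ Y) (h : Y ⟶ X⟦(1 : ℤ)⟧),
      Triangle.mk f g h ∈ distTriang C := by
  obtain ⟨fL, gN, hN, HN⟩ := s_trunc t M
  obtain ⟨e, q, h', HT⟩ := tau_trunc t (tauGE0 t M)
  have hN0 : t.ge 0 (tauGE0 t M) := tauGE0_GE0 t M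
  have hN₀GE : t.ge 0 (tauLE t (tauGE0 t M)) := tauLE_GE0_of_GE0 t hN0
  have hN₁GE : t.ge 1 (tauGE1 t (tauGE0 t M)) := tauGE1_GE1 t _
  obtain ⟨P, Q, hP, hQ, i, p, w, hTor⟩ := hTF.2.2.2.2.2 _ ⟨HT.2.1, hN₀GE⟩
  obtain ⟨Xt, u, v, hX3⟩ := distinguished_cocone_triangle₂ (i ≫ e ≫ hN)
  have HX : IsTrunc t (-1) (L0 t M) Xt P u v (i ≫ e ≫ hN) :=
    ⟨hX3, HN.2.1, by rw [neg_add_cancel]; exact (hTF.1 hP).2⟩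
  have hXLE : t.le 0 Xt :=
    LE_ext t hX3 0 (t.le_monotone (show (-1 : ℤ) ≤ 0 by omega) _ HN.2.1) (hTF.1 hP).1
  have hXT : tH0 t Xt ∈ T := by
    have eP : P ≅ tauGE0 t Xt := (HX.iso_s).2.some
    have e1 : tH0 t Xt ≅ tauLE t P := (tauLE_congr t eP.symm).some
    have e2 : tauLE t P ≅ P := (tauLE_iso_self_of_LE0 t (hTF.1 hP).1).some
    exact hTF.2.2.1 P _ (e1.trans e2).symm hP
  obtain ⟨ξ₁, hξA, hξB⟩ := complete_distinguished_triangle_morphism₂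
    (Triangle.mk u v (i ≫ e ≫ hN)) (Triangle.mk fL gN hN) hX3 HN.1 (𝟙 _) (i ≫ e)
    (by show (i ≫ e ≫ hN) ≫ (𝟙 (L0 t M))⟦(1 : ℤ)⟧' = (i ≫ e) ≫ hN; simp)
  obtain ⟨ξ, hfLu, hξ₂⟩ : ∃ ξ : Xt ⟶ M, u ≫ ξ = fL ∧ v ≫ i ≫ e = ξ ≫ gN :=
    ⟨ξ₁, hξA.trans (Category.id_comp _), hξB⟩
  obtain ⟨Y, yg, yh, hY3⟩ := distinguished_cocone_triangle ξ
  have key : ∀ W : C, t.le 0 W → tH0 t W ∈ T → ∀ φ : W ⟶ Y, φ = 0 := by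
    intro W hW1 hW2 φ
    have hyhξ : yh ≫ ξ⟦(1 : ℤ)⟧' = 0 := by
      have h0 := comp_distTriang_mor_zero₂₃ _ (rot_of_distTriang _ hY3)
      change yh ≫ (-(ξ⟦(1 : ℤ)⟧')) = 0 at h0
      rwa [Preadditive.comp_neg, neg_eq_zero] at h0
    have hκξ : (φ ≫ yh) ≫ ξ⟦(1 : ℤ)⟧' = 0 := by
      rw [Category.assoc, hyhξ, comp_zero]
    have h1 : (((φ ≫ yh) ≫ v⟦(1 : ℤ)⟧') ≫ i⟦(1 : ℤ)⟧') ≫ e⟦(1 : ℤ)⟧' = 0 := by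
      calc (((φ ≫ yh) ≫ v⟦(1 : ℤ)⟧') ≫ i⟦(1 : ℤ)⟧') ≫ e⟦(1 : ℤ)⟧'
          = (φ ≫ yh) ≫ (v ≫ i ≫ e)⟦(1 : ℤ)⟧' := by
            simp [Functor.map_comp]
        _ = (φ ≫ yh) ≫ (ξ ≫ gN)⟦(1 : ℤ)⟧' := by rw [hξ₂]
        _ = ((φ ≫ yh) ≫ ξ⟦(1 : ℤ)⟧') ≫ gN⟦(1 : ℤ)⟧' := by
            simp [Functor.map_comp]
        _ = 0 := by rw [hκξ, zero_comp]
    obtain ⟨n₁, hn₁⟩ := Triangle.coyoneda_exact₁ _ HT.1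
      (((φ ≫ yh) ≫ v⟦(1 : ℤ)⟧') ≫ i⟦(1 : ℤ)⟧') h1
    have hn₁0 : n₁ = 0 := hom_zero t n₁ (show (0 : ℤ) < 1 by omega) hW1 hN₁GE
    have h2 : ((φ ≫ yh) ≫ v⟦(1 : ℤ)⟧') ≫ i⟦(1 : ℤ)⟧' = 0 := by
      exact hn₁.trans (by rw [hn₁0]; exact zero_comp)
    obtain ⟨m, hm⟩ := Triangle.coyoneda_exact₁ _ hTor ((φ ≫ yh) ≫ v⟦(1 : ℤ)⟧') h2
    have hm0 : m = 0 := core_zero t T F hTF m hW1 hW2 (hTF.2.1 hQ).2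
      (hTF.2.2.2.1 _ _
        (tH0_iso_self_of_heart t (hTF.2.1 hQ).1 (hTF.2.1 hQ).2).some.symm hQ)
    have h3 : (φ ≫ yh) ≫ v⟦(1 : ℤ)⟧' = 0 := hm.trans (by rw [hm0]; exact zero_comp)
    obtain ⟨lam, hlam⟩ : ∃ lam : W ⟶ (L0 t M)⟦(1 : ℤ)⟧, φ ≫ yh = lam ≫ (-(u⟦(1 : ℤ)⟧')) :=
      Triangle.coyoneda_exact₁ _ (rot_of_distTriang _ hX3) (φ ≫ yh) h3
    have hκ_eq : φ ≫ yh = -(lam ≫ u⟦(1 : ℤ)⟧') := by simpa using hlam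
    have h4 : lam ≫ fL⟦(1 : ℤ)⟧' = 0 := by
      rw [← hfLu, Functor.map_comp, ← Category.assoc]
      have hlu : lam ≫ u⟦(1 : ℤ)⟧' = -(φ ≫ yh) := by rw [hκ_eq, neg_neg]
      rw [hlu, Preadditive.neg_comp, hκξ, neg_zero]
    obtain ⟨ν, hν⟩ : ∃ ν : W ⟶ tauGE0 t M, lam = ν ≫ hN := Triangle.coyoneda_exact₁ _ HN.1 lam h4
    have hν' : lam = ν ≫ hN := hν
    have hνq : ν ≫ q = 0 := hom_zero t _ (show (0 : ℤ) < 1 by omega) hW1 hN₁GE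
    obtain ⟨α, hα⟩ : ∃ α : W ⟶ tauLE t (tauGE0 t M), ν = α ≫ e :=
      Triangle.coyoneda_exact₂ _ HT.1 ν hνq
    have hα'' : ν = α ≫ e := hα
    obtain ⟨σ, hσ⟩ := lift_T t T F hTF hTor hP hQ hN₀GE hW1 hW2 α
    have hz : i ≫ e ≫ hN ≫ u⟦(1 : ℤ)⟧' = 0 := by
      have hδu := comp_distTriang_mor_zero₃₁ _ hX3
      change (i ≫ e ≫ hN) ≫ u⟦(1 : ℤ)⟧' = 0 at hδu
      simpa using hδu
    have hκ0 : φ ≫ yh = 0 := by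
      rw [hκ_eq, hν', hα'', hσ, neg_eq_zero]
      simp only [Category.assoc]
      rw [hz, comp_zero]
    obtain ⟨ψ₁, hψ₁⟩ := Triangle.coyoneda_exact₃ _ hY3 φ hκ0
    obtain ⟨ψ, hψ'⟩ : ∃ ψ : W ⟶ M, φ = ψ ≫ yg := ⟨ψ₁, hψ₁⟩
    have hψq : (ψ ≫ gN) ≫ q = 0 :=
      hom_zero t _ (show (0 : ℤ) < 1 by omega) hW1 hN₁GE
    obtain ⟨α', hα'⟩ : ∃ α' : W ⟶ tauLE t (tauGE0 t M), ψ ≫ gN = α' ≫ e :=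
      Triangle.coyoneda_exact₂ _ HT.1 (ψ ≫ gN) hψq
    have hα2 : ψ ≫ gN = α' ≫ e := hα'
    obtain ⟨σ', hσ'⟩ := lift_T t T F hTF hTor hP hQ hN₀GE hW1 hW2 α'
    have h23 : gN ≫ hN = 0 := comp_distTriang_mor_zero₂₃ _ HN.1
    have hσδ : σ' ≫ (i ≫ e ≫ hN) = 0 := by
      calc σ' ≫ i ≫ e ≫ hN = ((σ' ≫ i) ≫ e) ≫ hN := by simp
        _ = (α' ≫ e) ≫ hN := by rw [← hσ']
        _ = (ψ ≫ gN) ≫ hN := by rw [← hα2]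
        _ = ψ ≫ gN ≫ hN := by simp
        _ = 0 := by rw [h23, comp_zero]
    obtain ⟨ρ₀, hρ₀⟩ : ∃ ρ₀ : W ⟶ Xt, σ' = ρ₀ ≫ v := Triangle.coyoneda_exact₃ _ hX3 σ' hσδ
    have hρ2 : σ' = ρ₀ ≫ v := hρ₀
    have e1 : ψ ≫ gN = ρ₀ ≫ v ≫ i ≫ e := by
      rw [hα2, hσ', hρ2]; simp
    have e2 : (ρ₀ ≫ ξ) ≫ gN = ρ₀ ≫ v ≫ i ≫ e := by
      rw [Category.assoc, ← hξ₂]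
    have hdiff : (ψ - ρ₀ ≫ ξ) ≫ gN = 0 := by
      rw [Preadditive.sub_comp, e1, e2, sub_self]
    obtain ⟨τ, hτ⟩ : ∃ τ : W ⟶ L0 t M, ψ - ρ₀ ≫ ξ = τ ≫ fL := Triangle.coyoneda_exact₂ _ HN.1 _ hdiff
    have hτ' : ψ - ρ₀ ≫ ξ = τ ≫ fL := hτ
    have hξyg : ξ ≫ yg = 0 := comp_distTriang_mor_zero₁₂ _ hY3
    have hfg : fL ≫ yg = 0 := by rw [← hfLu, Category.assoc, hξyg, comp_zero]
    have hψ0 : ψ ≫ yg = 0 := by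
      have hψeq : ψ = τ ≫ fL + ρ₀ ≫ ξ := sub_eq_iff_eq_add.mp hτ'
      rw [hψeq, Preadditive.add_comp, Category.assoc, Category.assoc, hξyg, hfg,
        comp_zero, comp_zero, add_zero]
    rw [hψ', hψ0]
  have hTzero := (zero_mem_TF t T F hTF).1
  have hFzero := (zero_mem_TF t T F hTF).2
  have hY0 : t.ge 0 Y := by
    refine GE_of_orth t 0 (fun W hW f => ?_)
    have hW' : t.le (-1) W := by
      have h01 : (0 : ℤ) - 1 = -1 := by omega
      rwa [h01] at hW
    exact key W (t.le_monotone (by omega) _ hW')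
      (hTzero _ (isZero_tH0_of_LE_neg t hW')) f
  have hYF : tH0 t Y ∈ F := by
    obtain ⟨eY, qY, hY', HYt⟩ := tau_trunc t Y
    have hY₀GE : t.ge 0 (tauLE t Y) := tauLE_GE0_of_GE0 t hY0
    obtain ⟨P', Q', hP', hQ', i', p', w', hTor'⟩ := hTF.2.2.2.2.2 _ ⟨HYt.2.1, hY₀GE⟩
    have hP'T : tH0 t P' ∈ T := hTF.2.2.1 _ _
      (tH0_iso_self_of_heart t (hTF.1 hP').1 (hTF.1 hP').2).some.symm hP'
    have hie : i' ≫ eY = 0 := key P' (hTF.1 hP').1 hP'T (i' ≫ eY)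
    have hi'0 : i' = 0 := HYt.cancel (hTF.1 hP').1 i' hie
    obtain ⟨s, hs⟩ := Triangle.coyoneda_exact₃ _ (rot_of_distTriang _ hTor')
      (𝟙 (P'⟦(1 : ℤ)⟧)) (by show 𝟙 _ ≫ (-(i'⟦(1 : ℤ)⟧')) = 0; rw [hi'0]; simp)
    have hs0 : s = 0 := hom_zero t s (show (-1 : ℤ) < 0 by omega)
      (t.le_shift 0 1 (-1) (by omega) _ (hTF.1 hP').1) (hTF.2.1 hQ').2
    have hzP' : IsZero P' := isZero_of_shift 1
      ((IsZero.iff_id_eq_zero _).2 (by rw [hs, hs0, zero_comp]; rfl))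
    have : IsIso (Triangle.mk i' p' w').mor₂ :=
      (Triangle.isZero₁_iff_isIso₂ _ hTor').1 hzP'
    have hY₀F : tauLE t Y ∈ F :=
      hTF.2.2.2.1 Q' _ (@asIso _ _ _ _ (Triangle.mk i' p' w').mor₂ this).symm hQ'
    exact hTF.2.2.2.1 _ _
      ((tauLE_congr t (tauGE0_iso_self_of_GE0 t hY0).some).some).symm hY₀F
  exact ⟨Xt, Y, ⟨hXLE, hXT⟩, ⟨hY0, hYF⟩, ξ, yg, yh, hY3⟩

end

/-! ### The tilted t-structure -/

section
variable (t : TStructure C) (T F : Set C)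

def DLE (M : C) : Prop := t.le 0 M ∧ tH0 t M ∈ T

def DGE (M : C) : Prop := t.ge (-1) M ∧ tH0 t (M⟦(-1 : ℤ)⟧) ∈ F

lemma DLE_iso (hTF : IsTorsionPair t T F) {M M' : C} (e : M ≅ M') (h : DLE t T M) :
    DLE t T M' :=
  ⟨ObjectProperty.prop_of_iso (t.le 0) e h.1, hTF.2.2.1 _ _ (tH0_congr t e).some h.2⟩

lemma DGE_iso (hTF : IsTorsionPair t T F) {M M' : C} (e : M ≅ M') (h : DGE t F M) :
    DGE t F M' :=
  ⟨ObjectProperty.prop_of_iso (t.ge (-1)) e h.1,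
    hTF.2.2.2.1 _ _ (tH0_congr t ((shiftFunctor C (-1 : ℤ)).mapIso e)).some h.2⟩

def tilted (hTF : IsTorsionPair t T F) : TStructure C where
  le n X := DLE t T (X⟦n⟧)
  ge n X := DGE t F (X⟦n⟧)
  le_isClosedUnderIsomorphisms n := ⟨fun e h => DLE_iso t T F hTF ((shiftFunctor C n).mapIso e) h⟩
  ge_isClosedUnderIsomorphisms n := ⟨fun e h => DGE_iso t T F hTF ((shiftFunctor C n).mapIso e) h⟩
  le_shift n a n' h X hX := DLE_iso t T F hTF ((shiftFunctorAdd' C a n' n h).app X) hX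
  ge_shift n a n' h X hX := DGE_iso t T F hTF ((shiftFunctorAdd' C a n' n h).app X) hX
  zero' {X Y} f hX hY := by
    have e0 : (X⟦(0 : ℤ)⟧) ≅ X := (shiftFunctorZero C ℤ).app X
    have hX' : DLE t T X := DLE_iso t T F hTF e0 hX
    have e2 : ((Y⟦(1 : ℤ)⟧)⟦(-1 : ℤ)⟧) ≅ Y :=
      (shiftFunctorCompIsoId C (1 : ℤ) (-1 : ℤ) (by omega)).app Y
    have hY0 : t.ge 0 Y :=
      ObjectProperty.prop_of_iso (t.ge 0) e2 (t.ge_shift (-1) (-1) 0 (by omega) _ hY.1)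
    have hYF : tH0 t Y ∈ F := hTF.2.2.2.1 _ _ (tH0_congr t e2).some hY.2
    exact core_zero t T F hTF f hX'.1 hX'.2 hY0 hYF
  le_zero_le X hX := by
    have e0 : (X⟦(0 : ℤ)⟧) ≅ X := (shiftFunctorZero C ℤ).app X
    have hX' : DLE t T X := DLE_iso t T F hTF e0 hX
    have h1 : t.le (-1) (X⟦(1 : ℤ)⟧) := t.le_shift 0 1 (-1) (by omega) X hX'.1
    exact ⟨t.le_monotone (by omega) _ h1,
      (zero_mem_TF t T F hTF).1 _ (isZero_tH0_of_LE_neg t h1)⟩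
  ge_one_le X hX := by
    have e2 : ((X⟦(1 : ℤ)⟧)⟦(-1 : ℤ)⟧) ≅ X :=
      (shiftFunctorCompIsoId C (1 : ℤ) (-1 : ℤ) (by omega)).app X
    have hX0 : t.ge 0 X :=
      ObjectProperty.prop_of_iso (t.ge 0) e2 (t.ge_shift (-1) (-1) 0 (by omega) _ hX.1)
    have e0 : (X⟦(0 : ℤ)⟧) ≅ X := (shiftFunctorZero C ℤ).app X
    refine ⟨ObjectProperty.prop_of_iso (t.ge (-1)) e0.symm (t.ge_antitone (by omega) _ hX0), ?_⟩
    have hzf : IsZero (tH0 t (X⟦(-1 : ℤ)⟧)) :=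
      isZero_tH0_of_GE1 t (t.ge_shift 0 (-1) 1 (by omega) X hX0)
    exact hTF.2.2.2.1 _ _
      (tH0_congr t ((shiftFunctor C (-1 : ℤ)).mapIso e0.symm)).some
      ((zero_mem_TF t T F hTF).2 _ hzf)
  exists_triangle_zero_one A := by
    obtain ⟨X, Y, hX, hY, f, g, h, mem⟩ := tilt_exists t T F hTF A
    refine ⟨X, Y, ?_, ?_, f, g, h, mem⟩
    · exact DLE_iso t T F hTF ((shiftFunctorZero C ℤ).app X).symm hX
    · refine ⟨t.ge_shift 0 1 (-1) (by omega) Y hY.1, ?_⟩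
      have e2 : ((Y⟦(1 : ℤ)⟧)⟦(-1 : ℤ)⟧) ≅ Y :=
        (shiftFunctorCompIsoId C (1 : ℤ) (-1 : ℤ) (by omega)).app Y
      exact hTF.2.2.2.1 _ _ (tH0_congr t e2.symm).some hY.2

lemma tilted_LE_set (hb : tIsBounded t) (hTF : IsTorsionPair t T F) :
    {X : C | (tilted t T F hTF).le 0 X} =
      {M : C | (∀ m : ℤ, 0 < m → IsZero (tH t m M)) ∧ tH t 0 M ∈ T} := by
  ext X
  constructor
  · rintro ⟨h1, h2⟩
    have hX : t.le 0 X := ObjectProperty.prop_of_iso (t.le 0) ((shiftFunctorZero C ℤ).app X) h1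
    exact ⟨fun m hm => isZero_tH_of_LE t hX hm, h2⟩
  · rintro ⟨hv, h2⟩
    have hX : t.le 0 X := LE_of_vanish t hb hv
    exact ⟨ObjectProperty.prop_of_iso (t.le 0) ((shiftFunctorZero C ℤ).app X).symm hX, h2⟩

lemma tilted_GE_set (hb : tIsBounded t) (hTF : IsTorsionPair t T F) :
    {X : C | (tilted t T F hTF).ge 0 X} =
      {M : C | (∀ m : ℤ, m < -1 → IsZero (tH t m M)) ∧ tH t (-1) M ∈ F} := by
  ext X
  have e0 : (X⟦(0 : ℤ)⟧) ≅ X := (shiftFunctorZero C ℤ).app X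
  constructor
  · rintro ⟨h1, h2⟩
    have hX : t.ge (-1) X := ObjectProperty.prop_of_iso (t.ge (-1)) e0 h1
    refine ⟨fun m hm => isZero_tH_of_GE t hX hm, ?_⟩
    exact hTF.2.2.2.1 _ _ (tH0_congr t ((shiftFunctor C (-1 : ℤ)).mapIso e0)).some h2
  · rintro ⟨hv, h2⟩
    have hX : t.ge (-1) X := GE_of_vanish t hb hv
    exact ⟨ObjectProperty.prop_of_iso (t.ge (-1)) e0.symm hX,
      hTF.2.2.2.1 _ _ (tH0_congr t ((shiftFunctor C (-1 : ℤ)).mapIso e0.symm)).some h2⟩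

lemma tilted_bounded (hb : tIsBounded t) (hTF : IsTorsionPair t T F) :
    tIsBounded (tilted t T F hTF) := by
  intro X
  constructor
  · obtain ⟨⟨N, hN⟩, -⟩ := hb X
    refine ⟨N + 1, ?_⟩
    have h1 : t.le (-1) (X⟦(N + 1 : ℤ)⟧) := t.le_shift N (N + 1) (-1) (by omega) X hN
    exact ⟨t.le_monotone (by omega) _ h1,
      (zero_mem_TF t T F hTF).1 _ (isZero_tH0_of_LE_neg t h1)⟩
  · obtain ⟨-, ⟨N, hN⟩⟩ := hb X
    refine ⟨N, ?_⟩
    have h0 : t.ge 0 (X⟦N⟧) := t.ge_shift N N 0 (by omega) X hN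
    refine ⟨t.ge_antitone (by omega) _ h0, ?_⟩
    have h1 : t.ge 1 ((X⟦N⟧)⟦(-1 : ℤ)⟧) := t.ge_shift 0 (-1) 1 (by omega) _ h0
    exact (zero_mem_TF t T F hTF).2 _ (isZero_tH0_of_GE1 t h1)

lemma tilted_torsion (hTF : IsTorsionPair t T F) :
    IsTorsionPair (tilted t T F hTF)
      {M : C | ∃ Y ∈ F, Nonempty (M ≅ (shiftFunctor C (1 : ℤ)).obj Y)} T := by
  refine ⟨?_, ?_, ?_, ?_, ?_, ?_⟩
  · -- ΣF ⊆ heart of tilted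
    rintro M ⟨Z, hZ, ⟨eM⟩⟩
    have hZh := hTF.2.1 hZ
    have e0 : (M⟦(0 : ℤ)⟧) ≅ M := (shiftFunctorZero C ℤ).app M
    have eZM : (Z⟦(1 : ℤ)⟧) ≅ (M⟦(0 : ℤ)⟧) := eM.symm.trans e0.symm
    have h1 : t.le (-1) (Z⟦(1 : ℤ)⟧) := t.le_shift 0 1 (-1) (by omega) Z hZh.1
    have hDLE : DLE t T (Z⟦(1 : ℤ)⟧) :=
      ⟨t.le_monotone (by omega) _ h1,
        (zero_mem_TF t T F hTF).1 _ (isZero_tH0_of_LE_neg t h1)⟩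
    have e2 : ((Z⟦(1 : ℤ)⟧)⟦(-1 : ℤ)⟧) ≅ Z :=
      (shiftFunctorCompIsoId C (1 : ℤ) (-1 : ℤ) (by omega)).app Z
    have hzF : tH0 t ((Z⟦(1 : ℤ)⟧)⟦(-1 : ℤ)⟧) ∈ F := by
      have hself : tH0 t Z ∈ F := hTF.2.2.2.1 _ _
        (tH0_iso_self_of_heart t hZh.1 hZh.2).some.symm hZ
      exact hTF.2.2.2.1 _ _ (tH0_congr t e2.symm).some
        (hTF.2.2.2.1 _ _ (tH0_iso_self_of_heart t hZh.1 hZh.2).some.symm hZ)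
    have hDGE : DGE t F (Z⟦(1 : ℤ)⟧) :=
      ⟨t.ge_shift 0 1 (-1) (by omega) Z hZh.2, hzF⟩
    exact ⟨DLE_iso t T F hTF eZM hDLE, DGE_iso t T F hTF eZM hDGE⟩
  · -- T ⊆ heart of tilted
    intro W hW
    have hWh := hTF.1 hW
    have e0 : (W⟦(0 : ℤ)⟧) ≅ W := (shiftFunctorZero C ℤ).app W
    have hDLE : DLE t T W :=
      ⟨hWh.1, hTF.2.2.1 _ _ (tH0_iso_self_of_heart t hWh.1 hWh.2).some.symm hW⟩
    have hDGE : DGE t F W := by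
      refine ⟨t.ge_antitone (by omega) _ hWh.2, ?_⟩
      have h1 : t.ge 1 (W⟦(-1 : ℤ)⟧) := t.ge_shift 0 (-1) 1 (by omega) W hWh.2
      exact (zero_mem_TF t T F hTF).2 _ (isZero_tH0_of_GE1 t h1)
    exact ⟨DLE_iso t T F hTF e0.symm hDLE, DGE_iso t T F hTF e0.symm hDGE⟩
  · rintro A B e ⟨Z, hZ, ⟨eA⟩⟩
    exact ⟨Z, hZ, ⟨e.symm.trans eA⟩⟩
  · exact hTF.2.2.1
  · rintro A B ⟨Z, hZ, ⟨e⟩⟩ hB f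
    have hz : e.inv ≫ f = 0 := hom_zero t _ (show (-1 : ℤ) < 0 by omega)
      (t.le_shift 0 1 (-1) (by omega) Z (hTF.2.1 hZ).1) (hTF.1 hB).2
    calc f = e.hom ≫ (e.inv ≫ f) := by simp
      _ = 0 := by rw [hz, comp_zero]
  · intro M hM
    obtain ⟨hL, hG⟩ := hM
    have e0 : (M⟦(0 : ℤ)⟧) ≅ M := (shiftFunctorZero C ℤ).app M
    have hM1 : t.le 0 M := ObjectProperty.prop_of_iso (t.le 0) e0 hL.1
    have hMT : tH0 t M ∈ T := hTF.2.2.1 _ _ (tH0_congr t e0).some hL.2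
    have hM2 : t.ge (-1) M := ObjectProperty.prop_of_iso (t.ge (-1)) e0 hG.1
    have hMF : tH0 t (M⟦(-1 : ℤ)⟧) ∈ F := hTF.2.2.2.1 _ _
      (tH0_congr t ((shiftFunctor C (-1 : ℤ)).mapIso e0)).some hG.2
    obtain ⟨fL, gN, hN, HN⟩ := s_trunc t M
    have hNLE : t.le 0 (tauGE0 t M) := tauGE0_LE0_of_LE0 t hM1
    have eN : tH0 t M ≅ tauGE0 t M := (tauLE_iso_self_of_LE0 t hNLE).some
    have hNT : tauGE0 t M ∈ T := hTF.2.2.1 _ _ eN hMT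
    have hM_1 : t.ge 0 (M⟦(-1 : ℤ)⟧) := t.ge_shift (-1) (-1) 0 (by omega) M hM2
    have eZ : tH0 t (M⟦(-1 : ℤ)⟧) ≅ tauLE t (M⟦(-1 : ℤ)⟧) :=
      (tauLE_congr t (tauGE0_iso_self_of_GE0 t hM_1).some).some
    have hZF : tauLE t (M⟦(-1 : ℤ)⟧) ∈ F := hTF.2.2.2.1 _ _ eZ hMF
    exact ⟨L0 t M, tauGE0 t M, ⟨tauLE t (M⟦(-1 : ℤ)⟧), hZF, ⟨Iso.refl _⟩⟩, hNT,
      fL, gN, hN, HN.1⟩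

end

end HRS


theorem statement9 (t : TStructure C) (hbounded : tIsBounded t) (T F : Set C)
    (hTF : IsTorsionPair t T F) :
    ∃ t' : TStructure C,
      {X : C | t'.le 0 X} =
        {M : C | (∀ m : ℤ, 0 < m → IsZero (tH t m M)) ∧ tH t 0 M ∈ T} ∧
      {X : C | t'.ge 0 X} =
        {M : C | (∀ m : ℤ, m < -1 → IsZero (tH t m M)) ∧ tH t (-1) M ∈ F} ∧
      tIsBounded t' ∧
      IsTorsionPair t' {M : C | ∃ Y ∈ F, Nonempty (M ≅ (shiftFunctor C (1 : ℤ)).obj Y)} T :=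
  ⟨HRS.tilted t T F hTF, HRS.tilted_LE_set t T F hbounded hTF,
    HRS.tilted_GE_set t T F hbounded hTF,
    HRS.tilted_bounded t T F hbounded hTF, HRS.tilted_torsion t T F hTF⟩
end

section
/- Let C be a triangulated category and X_1, …, X_r a simple-minded collection in C. Fix i and let X_i' := ΣX_i, and for j ≠ i assume Hom(X_i, ΣX_i) = 0, so the extension closure of X_i is add(X_i); let g_j: Σ^{-1}X_j → X_{ij} be a minimal left add(X_i)-approximation and X_j' its cone. Then the right mutation of the collection X_1', …, X_r' at index i recovers X_1, …, X_r up to isomorphism: in the defining triangle Σ^{-1}X_j → X_{ij} → X_j' → X_j, the map X_{ij} → X_j' is a minimal right add(ΣX_i)-approximation of X_j' shifted appropriately. -/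
/-!
STATEMENT 15: For a simple-minded collection X_1, …, X_r with Hom(X_i, ΣX_i) = 0 (so that
the extension closure of X_i is add(X_i)), if g_j : Σ⁻¹X_j → X_{ij} is a minimal left
add(X_i)-approximation with cone X_j', then in the triangle Σ⁻¹X_j → X_{ij} → X_j' → X_j
the map X_{ij} → X_j' is a minimal right add(X_i) = Σ⁻¹ add(ΣX_i)-approximation, and the
right mutation recovers X_j (the cone of this approximation triangle is X_j).
-/

open CategoryTheory Limits Pretriangulated Triangulated

universe v u

variable (C : Type u) [Category.{v} C] [Preadditive C] [HasZeroObject C] [HasShift C ℤ]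
  [∀ (n : ℤ), (shiftFunctor C n).Additive] [Pretriangulated C]

def additiveClosure (X : Set C) : Set C :=
  ⋂₀ {S : Set C | X ⊆ S ∧ (∀ A B : C, (A ≅ B) → A ∈ S → B ∈ S) ∧
      (∀ Z : C, IsZero Z → Z ∈ S) ∧ (∀ A B : C, A ∈ S → B ∈ S → (A ⊞ B) ∈ S) ∧
      (∀ X Y : C, (∃ (i : X ⟶ Y) (p : Y ⟶ X), i ≫ p = 𝟙 X) → Y ∈ S → X ∈ S)}

def IsSMC {r : ℕ} (X : Fin r → C) : Prop :=
  (∀ i j (m : ℤ), m < 0 → ∀ f : X i ⟶ (shiftFunctor C m).obj (X j), f = 0) ∧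
  (∀ i, (𝟙 (X i) : X i ⟶ X i) ≠ 0 ∧ ∀ f : X i ⟶ X i, f = 0 ∨ IsIso f) ∧
  (∀ i j, i ≠ j → ∀ f : X i ⟶ X j, f = 0) ∧
  (∀ Z : C, Z ∈ thickClosure C (Set.range X))

/-- `f : A ⟶ B` is a minimal left `S`-approximation of `A`. -/
def IsMinLeftApprox (S : Set C) {A B : C} (f : A ⟶ B) : Prop :=
  B ∈ S ∧ (∀ B' : C, B' ∈ S → ∀ g : A ⟶ B', ∃ h : B ⟶ B', f ≫ h = g) ∧
  (∀ h : B ⟶ B, f ≫ h = f → IsIso h)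

/-- `f : A ⟶ B` is a minimal right `S`-approximation of `B`. -/
def IsMinRightApprox (S : Set C) {A B : C} (f : A ⟶ B) : Prop :=
  A ∈ S ∧ (∀ A' : C, A' ∈ S → ∀ g : A' ⟶ B, ∃ h : A' ⟶ A, h ≫ f = g) ∧
  (∀ h : A ⟶ A, h ≫ f = f → IsIso h)

variable {C}

lemma hom_zero_of_mem_additiveClosure {A T : C} {B : C}
    (h0 : ∀ f : B ⟶ T, f = 0) (hA : A ∈ additiveClosure C {B}) :
    ∀ f : A ⟶ T, f = 0 := by
  refine hA {A : C | ∀ f : A ⟶ T, f = 0} ⟨?_, ?_, ?_, ?_, ?_⟩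
  · rintro x rfl f; exact h0 f
  · intro A B e hA f
    have : e.hom ≫ f = 0 := hA _
    calc f = e.inv ≫ e.hom ≫ f := by simp
    _ = 0 := by rw [this, Limits.comp_zero]
  · intro Z hZ f; exact hZ.eq_of_src f 0
  · intro A B hA hB f
    have h1 : biprod.inl ≫ f = 0 := hA _
    have h2 : biprod.inr ≫ f = 0 := hB _
    apply biprod.hom_ext' <;> simp [h1, h2]
  · rintro A Y ⟨ι, p, hip⟩ hY f
    have : p ≫ f = 0 := hY _
    calc f = ι ≫ p ≫ f := by rw [← Category.assoc, hip, Category.id_comp]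
    _ = 0 := by rw [this, Limits.comp_zero]


theorem statement15 {r : ℕ} (X : Fin r → C) (hX : IsSMC C X) (i : Fin r)
    -- Hom(X_i, ΣX_i) = 0, so that the extension closure of X_i is add(X_i)
    (hrigid : ∀ f : X i ⟶ (shiftFunctor C (1 : ℤ)).obj (X i), f = 0)
    (j : Fin r) (hji : j ≠ i) (Xij Xj' : C)
    (g : (shiftFunctor C (-1 : ℤ)).obj (X j) ⟶ Xij)
    (hg : IsMinLeftApprox C (additiveClosure C {X i}) g)
    (c : Xij ⟶ Xj')
    (w : Xj' ⟶ (shiftFunctor C (1 : ℤ)).obj ((shiftFunctor C (-1 : ℤ)).obj (X j)))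
    (htri : Triangle.mk g c w ∈ distTriang C) :
    -- the map X_{ij} → X_j' is a minimal right add(X_i)-approximation …
    IsMinRightApprox C (additiveClosure C {X i}) c ∧
    -- … whose cone triangle recovers X_j, so the right mutation of the left-mutated
    -- collection recovers the original collection up to isomorphism
    ∃ (u : Xj' ⟶ X j) (v : X j ⟶ (shiftFunctor C (1 : ℤ)).obj Xij),
      Triangle.mk c u v ∈ distTriang C := by
  have e : (shiftFunctor C (-1 : ℤ) ⋙ shiftFunctor C (1 : ℤ)).obj (X j) ≅ X j :=
    (shiftFunctorCompIsoId C (-1 : ℤ) (1 : ℤ) (by ring)).app (X j)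
  -- maps from X i to (X j)⟦-1⟧⟦1⟧ vanish
  have h1 : ∀ f : X i ⟶ (shiftFunctor C (1 : ℤ)).obj ((shiftFunctor C (-1 : ℤ)).obj (X j)),
      f = 0 := by
    intro f
    have : f ≫ e.hom = 0 := hX.2.2.1 i j (Ne.symm hji) _
    calc f = (f ≫ e.hom) ≫ e.inv := by simp
    _ = 0 := by rw [this, Limits.zero_comp]
  -- maps from X i to (X j)⟦-1⟧ vanish
  have h2 : ∀ f : X i ⟶ (shiftFunctor C (-1 : ℤ)).obj (X j), f = 0 :=
    hX.1 i j (-1) (by norm_num)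
  constructor
  · refine ⟨hg.1, ?_, ?_⟩
    · intro A' hA' f
      have hfw : f ≫ w = 0 := hom_zero_of_mem_additiveClosure h1 hA' _
      obtain ⟨b, hb⟩ := Triangle.coyoneda_exact₃ _ htri f hfw
      exact ⟨b, hb.symm⟩
    · intro h hh
      have : (h - 𝟙 Xij) ≫ c = 0 := by
        simp [Preadditive.sub_comp, hh]
      obtain ⟨k, hk⟩ := Triangle.coyoneda_exact₂ _ htri (h - 𝟙 Xij) this
      have hk0 : k = 0 := hom_zero_of_mem_additiveClosure h2 hg.1 k
      have : h = 𝟙 Xij := by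
        have := hk
        rw [hk0, Limits.zero_comp] at this
        exact sub_eq_zero.mp this
      rw [this]; infer_instance
  · refine ⟨w ≫ e.hom, e.inv ≫ (-(shiftFunctor C (1 : ℤ)).map g), ?_⟩
    refine isomorphic_distinguished _ (rot_of_distTriang _ htri) _ ?_
    exact Triangle.isoMk _ _ (Iso.refl _) (Iso.refl _) e.symm
      (by exact (Category.comp_id c).trans (Category.id_comp c).symm)
      (by exact (Category.assoc _ _ _).trans ((congrArg (w ≫ ·) e.hom_inv_id).trans
        ((Category.comp_id w).trans (Category.id_comp w).symm)))
      (by exact ((congrArg (fun x => (e.inv ≫ (-(shiftFunctor C (1 : ℤ)).map g)) ≫ x)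
        ((shiftFunctor C (1 : ℤ)).map_id _)).trans (Category.comp_id _)))
end
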